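/- arXiv:2103.04497 — 2 statements merged into one kernel-verified Lean document; each statement's English description precedes it below -/
import Mathlib

section
/- Let (X,d) be a compact metric space with a continuous ℝ^D-action T such that (X,T) is expansive in the sense that there exists δ > 0 with B_δ(x, d_{ℝ^D}) = {x} for all x ∈ X. Then the upper metric mean dimension of (X,T,d) is zero. -/
open Filter Set MeasureTheory Topology

/-- Minimal cardinality of an `ε`-spanning set of `K` w.r.t. the (pseudo)metric `ρ`. -/
noncomputable def spanNum {X : Type*} (ρ : X → X → ℝ) (K : Set X) (ε : ℝ) : ℕ :=
  sInf {n : ℕ | ∃ S : Finset X, S.card = n ∧ ∀ x ∈ K, ∃ y ∈ S, ρ x y ≤ ε}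

/-- `d_Ω(x,y) = sup_{a ∈ Ω} d(Tᵃx, Tᵃy)` for an `ℝ^D`-action `T` and `Ω ⊆ ℝ^D`. -/
noncomputable def dOmR {X : Type*} [MetricSpace X] {D : ℕ} (T : (Fin D → ℝ) → X → X)
    (Ω : Set (Fin D → ℝ)) (x y : X) : ℝ :=
  ⨆ a : Ω, dist (T a x) (T a y)

/-- The cube `[s,t]^D ⊆ ℝ^D`. -/
def cubeR (D : ℕ) (s t : ℝ) : Set (Fin D → ℝ) := {a | ∀ i, a i ∈ Set.Icc s t}

/-- Entropy of `K` at scale `ε`: `limsup_{L→∞} (1/L^D) log #(K, d_{[0,L]^D}, ε)`. -/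
noncomputable def entSR {X : Type*} [MetricSpace X] {D : ℕ} (T : (Fin D → ℝ) → X → X)
    (K : Set X) (ε : ℝ) : ℝ :=
  limsup (fun L : ℝ => Real.log (spanNum (dOmR T (cubeR D 0 L)) K ε) / L ^ D) atTop

/-- The Bowen ball `B_δ(x, d_{ℝ^D})`. -/
def bowenBallR {X : Type*} [MetricSpace X] {D : ℕ} (T : (Fin D → ℝ) → X → X)
    (δ : ℝ) (x : X) : Set X :=
  {y | dOmR T univ x y ≤ δ}

/-- Upper metric mean dimension. -/
noncomputable def mdimMUpperR {X : Type*} [MetricSpace X] {D : ℕ}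
    (T : (Fin D → ℝ) → X → X) : ℝ :=
  limsup (fun ε : ℝ => entSR T univ ε / Real.log (1 / ε)) (nhdsWithin 0 (Set.Ioi 0))

/-- Lower metric mean dimension. -/
noncomputable def mdimMLowerR {X : Type*} [MetricSpace X] {D : ℕ}
    (T : (Fin D → ℝ) → X → X) : ℝ :=
  liminf (fun ε : ℝ => entSR T univ ε / Real.log (1 / ε)) (nhdsWithin 0 (Set.Ioi 0))

/-- The closed `r`-neighborhood of `Ω ⊆ ℝ^D` in the `ℓ^∞` norm. -/
def nbhdR {D : ℕ} (r : ℝ) (Ω : Set (Fin D → ℝ)) : Set (Fin D → ℝ) :=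
  {x | ∃ y ∈ Ω, ‖x - y‖ ≤ r}


set_option linter.unusedSectionVars false
set_option linter.unusedVariables false

section Aux

variable {X : Type*} [MetricSpace X] [CompactSpace X] {D : ℕ}
variable (T : (Fin D → ℝ) → X → X)

lemma exists_dist_bound : ∃ C : ℝ, ∀ u v : X, dist u v ≤ C := by
  obtain ⟨C, hC⟩ := Metric.isBounded_iff.1 (isCompact_univ (X := X)).isBounded
  exact ⟨C, fun u v => hC (mem_univ u) (mem_univ v)⟩

lemma dist_le_dOmR {C : ℝ} (hC : ∀ u v : X, dist u v ≤ C) {Ω : Set (Fin D → ℝ)}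
    {w : Fin D → ℝ} (hw : w ∈ Ω) (x y : X) :
    dist (T w x) (T w y) ≤ dOmR T Ω x y :=
  le_ciSup (f := fun a : Ω => dist (T a x) (T a y))
    ⟨C, by rintro _ ⟨a, rfl⟩; exact hC _ _⟩ (⟨w, hw⟩ : Ω)

lemma dOmR_le {Ω : Set (Fin D → ℝ)} {x y : X} {c : ℝ} (hc : 0 ≤ c)
    (h : ∀ a ∈ Ω, dist (T a x) (T a y) ≤ c) : dOmR T Ω x y ≤ c :=
  Real.iSup_le (fun a => h a a.2) hc

/-- Uniform continuity on the unit cube. -/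
lemma unif_cont (hTc : Continuous fun p : (Fin D → ℝ) × X => T p.1 p.2) {δ : ℝ} (hδ : 0 < δ) :
    ∃ η > 0, ∀ x y : X, dist x y ≤ η → ∀ a : Fin D → ℝ, (∀ i, a i ∈ Icc (0:ℝ) 1) →
      dist (T a x) (T a y) ≤ δ := by
  have hK : IsCompact (cubeR D 0 1) := by
    have : cubeR D 0 1 = Set.pi univ fun _ => Icc (0:ℝ) 1 := by
      ext a; simp only [Set.mem_univ_pi]; exact Iff.rfl
    rw [this]; exact isCompact_univ_pi fun _ => isCompact_Icc
  have huc := (hK.prod isCompact_univ).uniformContinuousOn_of_continuous hTc.continuousOn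
  rw [Metric.uniformContinuousOn_iff_le] at huc
  obtain ⟨η, hη, H⟩ := huc δ hδ
  refine ⟨η, hη, fun x y hxy a ha => ?_⟩
  have hmem : (a, x) ∈ (cubeR D 0 1) ×ˢ (univ : Set X) := ⟨ha, mem_univ _⟩
  have hmem' : (a, y) ∈ (cubeR D 0 1) ×ˢ (univ : Set X) := ⟨ha, mem_univ _⟩
  refine H _ hmem _ hmem' ?_
  calc dist ((a, x) : (Fin D → ℝ) × X) (a, y) = dist x y := by
        rw [Prod.dist_eq, dist_self, max_eq_right dist_nonneg]
    _ ≤ η := hxy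

end Aux

section Aux2

variable {X : Type*} [MetricSpace X] [CompactSpace X] {D : ℕ}
variable (T : (Fin D → ℝ) → X → X)

/-- Uniform expansiveness. -/
lemma unif_exp (hTc : Continuous fun p : (Fin D → ℝ) × X => T p.1 p.2)
    {δ : ℝ} (hδ : 0 < δ) (hexp : ∀ x : X, bowenBallR T δ x = {x}) {ε : ℝ} (hε : 0 < ε) :
    ∃ r : ℕ, ∀ x y : X, (∀ a : Fin D → ℝ, (∀ i, |a i| ≤ (r:ℝ)) →
      dist (T a x) (T a y) ≤ δ) → dist x y ≤ ε := by
  by_contra hcon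
  push_neg at hcon
  choose u v hu hv using hcon
  obtain ⟨p, -, φ, hφ, hp⟩ :=
    isCompact_univ.tendsto_subseq (fun n => mem_univ (⟨u n, v n⟩ : X × X))
  have hxy : ∀ a : Fin D → ℝ, dist (T a p.1) (T a p.2) ≤ δ := by
    intro a
    have hc1 : Continuous fun q : X × X => T a q.1 := by
      exact hTc.comp (continuous_const.prodMk continuous_fst)
    have hc2 : Continuous fun q : X × X => T a q.2 := by
      exact hTc.comp (continuous_const.prodMk continuous_snd)
    have hcont : Continuous fun q : X × X => dist (T a q.1) (T a q.2) := hc1.dist hc2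
    have htd := (hcont.tendsto p).comp hp
    refine le_of_tendsto htd ?_
    filter_upwards [eventually_ge_atTop ⌈‖a‖⌉₊] with n hn
    show dist (T a (u (φ n))) (T a (v (φ n))) ≤ δ
    refine hu (φ n) a fun i => ?_
    calc |a i| ≤ ‖a‖ := by
          simpa using norm_le_pi_norm a i
      _ ≤ (⌈‖a‖⌉₊ : ℝ) := Nat.le_ceil _
      _ ≤ (n : ℝ) := by exact_mod_cast hn
      _ ≤ (φ n : ℝ) := by exact_mod_cast hφ.le_apply
  have hyx : p.2 ∈ bowenBallR T δ p.1 := by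
    show dOmR T univ p.1 p.2 ≤ δ
    exact Real.iSup_le (fun a => hxy a) hδ.le
  rw [hexp p.1, mem_singleton_iff] at hyx
  have hlim := (continuous_dist.tendsto p).comp hp
  have hge : ε ≤ dist p.1 p.2 :=
    ge_of_tendsto hlim (Eventually.of_forall fun n => (hv (φ n)).le)
  rw [hyx, dist_self] at hge
  exact absurd hge (not_le.2 hε)

/-- A finite net. -/
lemma exists_net [Nonempty X] {η : ℝ} (hη : 0 < η) :
    ∃ S₀ : Finset X, S₀.Nonempty ∧ ∀ x : X, ∃ y ∈ S₀, dist x y ≤ η := by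
  classical
  obtain ⟨t, -, hft, hcov⟩ := finite_cover_balls_of_compact (isCompact_univ (X := X)) hη
  refine ⟨insert (Classical.arbitrary X) hft.toFinset, Finset.insert_nonempty _ _, fun x => ?_⟩
  obtain ⟨y, hy⟩ := mem_iUnion.1 (hcov (mem_univ x))
  rw [mem_iUnion] at hy
  obtain ⟨hyt, hxy⟩ := hy
  exact ⟨y, Finset.mem_insert_of_mem (hft.mem_toFinset.2 hyt), (Metric.mem_ball.1 hxy).le⟩

end Aux2

section Aux3

variable {X : Type*} [MetricSpace X] [CompactSpace X] {D : ℕ}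
variable (T : (Fin D → ℝ) → X → X)

/-- Existence of a `δ`-spanning set of controlled size for the cube metric. -/
lemma exists_span_finset [Nonempty X]
    (hTadd : ∀ (a b : Fin D → ℝ) (x : X), T (a + b) x = T a (T b x))
    {δ η : ℝ} (hδ : 0 < δ)
    (hA : ∀ x y : X, dist x y ≤ η → ∀ a : Fin D → ℝ, (∀ i, a i ∈ Icc (0:ℝ) 1) →
      dist (T a x) (T a y) ≤ δ)
    {S₀ : Finset X} (hS₀ : ∀ x : X, ∃ y ∈ S₀, dist x y ≤ η / 2)
    (L : ℝ) (hL : 0 ≤ L) :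
    ∃ S : Finset X, S.card ≤ S₀.card ^ ((⌈L⌉₊ + 1) ^ D) ∧
      ∀ x : X, ∃ y ∈ S, dOmR T (cubeR D 0 L) x y ≤ δ := by
  classical
  set M := ⌈L⌉₊ with hM
  choose g hgS hgd using hS₀
  set κ : (Fin D → Fin (M + 1)) → (Fin D → ℝ) := fun v i => ((v i : ℕ) : ℝ) with hκ
  set Φ : X → ((Fin D → Fin (M + 1)) → X) := fun x v => g (T (κ v) x) with hΦ
  set ψ : ((Fin D → Fin (M + 1)) → X) → X :=
    fun f => if hf : ∃ x, Φ x = f then hf.choose else Classical.arbitrary X with hψ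
  set S : Finset X :=
    Finset.image (fun v : (Fin D → Fin (M + 1)) → {y // y ∈ S₀} => ψ fun w => (v w : X))
      Finset.univ with hS
  refine ⟨S, ?_, ?_⟩
  · calc S.card ≤ (Finset.univ : Finset ((Fin D → Fin (M + 1)) → {y // y ∈ S₀})).card :=
        Finset.card_image_le
      _ = S₀.card ^ ((M + 1) ^ D) := by
        simp [Finset.card_univ, Fintype.card_fun]
  · intro x
    have hx : ∃ x', Φ x' = Φ x := ⟨x, rfl⟩
    set y := ψ (Φ x) with hy
    have h' : y = hx.choose := dif_pos hx
    have hΦy : Φ y = Φ x := by rw [h']; exact hx.choose_spec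
    refine ⟨y, ?_, ?_⟩
    · refine Finset.mem_image.2 ⟨fun w => ⟨Φ x w, hgS _⟩, Finset.mem_univ _, rfl⟩
    · refine dOmR_le T hδ.le fun a ha => ?_
      have ha' : ∀ i, a i ∈ Icc (0:ℝ) L := ha
      set v : Fin D → Fin (M + 1) := fun i =>
        ⟨⌊a i⌋₊, Nat.lt_succ_of_le ((Nat.floor_le_floor (ha' i).2).trans (Nat.floor_le_ceil L))⟩
        with hv
      set b := a - κ v with hbdef
      have hb : ∀ i, b i ∈ Icc (0:ℝ) 1 := by
        intro i
        have h1 : (⌊a i⌋₊ : ℝ) ≤ a i := Nat.floor_le (ha' i).1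
        have h2 : a i < (⌊a i⌋₊ : ℝ) + 1 := Nat.lt_floor_add_one _
        constructor
        · show (0:ℝ) ≤ a i - (⌊a i⌋₊ : ℝ); linarith
        · show a i - (⌊a i⌋₊ : ℝ) ≤ 1; linarith
      have hgeq : g (T (κ v) y) = g (T (κ v) x) := congrFun hΦy v
      have key : dist (T (κ v) x) (T (κ v) y) ≤ η := by
        calc dist (T (κ v) x) (T (κ v) y)
            ≤ dist (T (κ v) x) (g (T (κ v) x)) + dist (g (T (κ v) x)) (T (κ v) y) :=
              dist_triangle _ _ _
          _ ≤ η / 2 + η / 2 :=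
              add_le_add (hgd _) (by rw [← hgeq, dist_comm]; exact hgd _)
          _ = η := by ring
      have hstep := hA _ _ key b hb
      have hba : b + κ v = a := sub_add_cancel a (κ v)
      have e1 : T b (T (κ v) x) = T a x := by rw [← hTadd, hba]
      have e2 : T b (T (κ v) y) = T a y := by rw [← hTadd, hba]
      rwa [e1, e2] at hstep

end Aux3

section Aux4

variable {X : Type*} [MetricSpace X] [CompactSpace X] {D : ℕ}
variable (T : (Fin D → ℝ) → X → X)

/-- Comparison of spanning numbers at small scale with those at the expansiveness scale. -/
lemma span_mono
    (hT0 : ∀ x : X, T 0 x = x)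
    (hTadd : ∀ (a b : Fin D → ℝ) (x : X), T (a + b) x = T a (T b x))
    {C : ℝ} (hC : ∀ u v : X, dist u v ≤ C)
    {δ ε : ℝ} (hδ : 0 < δ) (hε : 0 < ε) (r : ℕ)
    (hB : ∀ x y : X, (∀ a : Fin D → ℝ, (∀ i, |a i| ≤ (r:ℝ)) →
      dist (T a x) (T a y) ≤ δ) → dist x y ≤ ε)
    (L : ℝ)
    (hne : {n : ℕ | ∃ S : Finset X, S.card = n ∧
      ∀ x ∈ univ, ∃ y ∈ S, dOmR T (cubeR D 0 (L + 2 * r)) x y ≤ δ}.Nonempty) :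
    spanNum (dOmR T (cubeR D 0 L)) univ ε ≤
      spanNum (dOmR T (cubeR D 0 (L + 2 * r))) univ δ := by
  classical
  have hmem := Nat.sInf_mem hne
  obtain ⟨S, hScard, hSspan⟩ := hmem
  set c : Fin D → ℝ := fun _ => (r : ℝ) with hc
  set S' := Finset.image (T c) S with hS'
  have hspan' : ∀ x ∈ (univ : Set X), ∃ y ∈ S', dOmR T (cubeR D 0 L) x y ≤ ε := by
    intro x _
    obtain ⟨y, hyS, hyd⟩ := hSspan (T (-c) x) (mem_univ _)
    refine ⟨T c y, Finset.mem_image_of_mem _ hyS, ?_⟩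
    refine dOmR_le T hε.le fun b hb => ?_
    refine hB _ _ fun a ha => ?_
    have hxz : T c (T (-c) x) = x := by
      rw [← hTadd]; simp [hT0]
    have e1 : T a (T b x) = T (a + b + c) (T (-c) x) := by
      rw [← hTadd]
      conv_lhs => rw [← hxz]
      rw [← hTadd, ← hTadd]
    have e2 : T a (T b (T c y)) = T (a + b + c) y := by
      rw [← hTadd, ← hTadd]
    have hmem : a + b + c ∈ cubeR D 0 (L + 2 * r) := by
      intro i
      have h1 : |a i| ≤ (r : ℝ) := ha i
      have h2 : (0:ℝ) ≤ b i := (hb i).1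
      have h3 : b i ≤ L := (hb i).2
      have h4 : -(r:ℝ) ≤ a i := neg_le_of_abs_le h1
      have h5 : a i ≤ (r:ℝ) := le_of_abs_le h1
      constructor
      · show (0:ℝ) ≤ a i + b i + c i
        simp only [hc]; linarith
      · show a i + b i + c i ≤ L + 2 * r
        simp only [hc]; linarith
    calc dist (T a (T b x)) (T a (T b (T c y)))
        = dist (T (a + b + c) (T (-c) x)) (T (a + b + c) y) := by rw [e1, e2]
      _ ≤ dOmR T (cubeR D 0 (L + 2 * r)) (T (-c) x) y := dist_le_dOmR T hC hmem _ _
      _ ≤ δ := hyd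
  calc spanNum (dOmR T (cubeR D 0 L)) univ ε ≤ S'.card :=
        Nat.sInf_le ⟨S', rfl, hspan'⟩
    _ ≤ S.card := Finset.card_image_le
    _ = _ := hScard

end Aux4

open Topology
section Aux5

variable {X : Type*} [MetricSpace X] [CompactSpace X] {D : ℕ}
variable (T : (Fin D → ℝ) → X → X)

lemma tendsto_ratio (c A : ℝ) :
    Tendsto (fun L : ℝ => (L + c) ^ D * A / L ^ D) atTop (𝓝 A) := by
  have h1 : Tendsto (fun L : ℝ => 1 + c / L) atTop (𝓝 1) := by
    simpa using (tendsto_const_nhds (x := (1:ℝ))).add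
      ((tendsto_const_nhds (x := c)).div_atTop tendsto_id)
  have h2 : Tendsto (fun L : ℝ => (1 + c / L) ^ D * A) atTop (𝓝 A) := by
    simpa using (h1.pow D).mul_const A
  refine h2.congr' ?_
  filter_upwards [eventually_gt_atTop (0:ℝ)] with L hL
  have hL0 : L ≠ 0 := ne_of_gt hL
  have hfrac : 1 + c / L = (L + c) / L := by field_simp
  rw [hfrac, div_pow, div_mul_eq_mul_div]

lemma ent_bounds [Nonempty X]
    (hTc : Continuous fun p : (Fin D → ℝ) × X => T p.1 p.2)
    (hT0 : ∀ x : X, T 0 x = x)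
    (hTadd : ∀ (a b : Fin D → ℝ) (x : X), T (a + b) x = T a (T b x))
    {δ : ℝ} (hδ : 0 < δ) (hexp : ∀ x : X, bowenBallR T δ x = {x})
    {η : ℝ}
    (hA : ∀ x y : X, dist x y ≤ η → ∀ a : Fin D → ℝ, (∀ i, a i ∈ Icc (0:ℝ) 1) →
      dist (T a x) (T a y) ≤ δ)
    {S₀ : Finset X} (hS₀ : ∀ x : X, ∃ y ∈ S₀, dist x y ≤ η / 2)
    {C : ℝ} (hC : ∀ u v : X, dist u v ≤ C)
    {ε : ℝ} (hε : 0 < ε) (hεδ : ε ≤ δ) :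
    0 ≤ entSR T univ ε ∧ entSR T univ ε ≤ Real.log S₀.card := by
  obtain ⟨r, hB⟩ := unif_exp T hTc hδ hexp hε
  set N := S₀.card with hNdef
  have hlogN : 0 ≤ Real.log N := Real.log_natCast_nonneg N
  set f := fun L : ℝ => Real.log (spanNum (dOmR T (cubeR D 0 L)) univ ε) / L ^ D with hf
  set cc : ℝ := 2 * (r:ℝ) + 2 with hcc
  set g := fun L : ℝ => (L + cc) ^ D * Real.log N / L ^ D with hgdef
  have hg : Tendsto g atTop (𝓝 (Real.log N)) := tendsto_ratio cc (Real.log N)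
  have hfg : ∀ᶠ L in atTop, f L ≤ g L := by
    filter_upwards [eventually_ge_atTop (1:ℝ)] with L hL1
    have hL0 : (0:ℝ) < L := lt_of_lt_of_le zero_lt_one hL1
    have hL2 : (0:ℝ) ≤ L + 2 * r := by positivity
    obtain ⟨S, hScard, hSspan⟩ := exists_span_finset T hTadd hδ hA hS₀ (L + 2 * r) hL2
    have hmem2 : S.card ∈ {n : ℕ | ∃ S' : Finset X, S'.card = n ∧
        ∀ x ∈ univ, ∃ y ∈ S', dOmR T (cubeR D 0 (L + 2 * r)) x y ≤ δ} :=
      ⟨S, rfl, fun x _ => hSspan x⟩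
    have hmemset : spanNum (dOmR T (cubeR D 0 (L + 2 * r))) univ δ ≤ N ^ ((⌈L + 2 * r⌉₊ + 1) ^ D) :=
      (Nat.sInf_le hmem2).trans hScard
    have hne : {n : ℕ | ∃ S : Finset X, S.card = n ∧
        ∀ x ∈ univ, ∃ y ∈ S, dOmR T (cubeR D 0 (L + 2 * r)) x y ≤ δ}.Nonempty :=
      ⟨S.card, S, rfl, fun x _ => hSspan x⟩
    have h1 := span_mono T hT0 hTadd hC hδ hε r hB L hne
    set n := spanNum (dOmR T (cubeR D 0 L)) univ ε with hn
    have hle : (n:ℝ) ≤ ((N ^ ((⌈L + 2 * r⌉₊ + 1) ^ D) : ℕ) : ℝ) := by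
      exact_mod_cast h1.trans hmemset
    have hlog : Real.log n ≤ (((⌈L + 2 * r⌉₊ + 1) ^ D : ℕ) : ℝ) * Real.log N := by
      rcases Nat.eq_zero_or_pos n with h0 | hpos
      · rw [h0]; simp only [Nat.cast_zero, Real.log_zero]; positivity
      · calc Real.log n ≤ Real.log ((N ^ ((⌈L + 2 * r⌉₊ + 1) ^ D) : ℕ) : ℝ) :=
              Real.log_le_log (by exact_mod_cast hpos) hle
          _ = (((⌈L + 2 * r⌉₊ + 1) ^ D : ℕ) : ℝ) * Real.log N := by
              push_cast [Real.log_pow]; ring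
    have hcoef : (((⌈L + 2 * r⌉₊ + 1) ^ D : ℕ) : ℝ) ≤ (L + cc) ^ D := by
      have hceil : ((⌈L + 2 * r⌉₊ : ℝ) + 1) ≤ L + cc := by
        have h2 := Nat.ceil_lt_add_one hL2
        rw [hcc]; linarith
      calc (((⌈L + 2 * r⌉₊ + 1) ^ D : ℕ) : ℝ) = ((⌈L + 2 * r⌉₊ : ℝ) + 1) ^ D := by
            push_cast; ring
        _ ≤ (L + cc) ^ D := pow_le_pow_left₀ (by positivity) hceil D
    have hnum : Real.log n ≤ (L + cc) ^ D * Real.log N :=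
      hlog.trans (mul_le_mul_of_nonneg_right hcoef hlogN)
    exact (div_le_div_iff_of_pos_right (pow_pos hL0 D)).mpr hnum
  have hf0 : ∀ᶠ L in atTop, 0 ≤ f L := by
    filter_upwards [eventually_gt_atTop (0:ℝ)] with L hL
    exact div_nonneg (Real.log_natCast_nonneg _) (pow_nonneg hL.le D)
  have hbg : IsBoundedUnder (· ≤ ·) atTop g := hg.isBoundedUnder_le
  have hbf : IsBoundedUnder (· ≤ ·) atTop f := hbg.mono_le hfg
  have hcob : IsCoboundedUnder (· ≤ ·) atTop f := isCoboundedUnder_le_of_eventually_le atTop hf0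
  constructor
  · exact le_limsup_of_frequently_le hf0.frequently hbf
  · calc entSR T univ ε = limsup f atTop := rfl
      _ ≤ limsup g atTop := limsup_le_limsup hfg hcob hbg
      _ = Real.log N := hg.limsup_eq

end Aux5

/-- An expansive ℝ^D-action has zero upper metric mean dimension. -/
theorem stmt16 {X : Type*} [MetricSpace X] [CompactSpace X] {D : ℕ}
    (T : (Fin D → ℝ) → X → X)
    (hTc : Continuous fun p : (Fin D → ℝ) × X => T p.1 p.2)
    (hT0 : ∀ x : X, T 0 x = x)
    (hTadd : ∀ (a b : Fin D → ℝ) (x : X), T (a + b) x = T a (T b x))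
    (h : ∃ δ : ℝ, 0 < δ ∧ ∀ x : X, bowenBallR T δ x = {x}) :
    mdimMUpperR T = 0 := by
  obtain ⟨δ, hδ, hexp⟩ := h
  rcases isEmpty_or_nonempty X with hX | hX
  · have hsp : ∀ (L ε : ℝ), spanNum (dOmR T (cubeR D 0 L)) univ ε = 0 := by
      intro L ε
      have h0 : (0:ℕ) ∈ {n : ℕ | ∃ S : Finset X, S.card = n ∧
          ∀ x ∈ univ, ∃ y ∈ S, dOmR T (cubeR D 0 L) x y ≤ ε} :=
        ⟨∅, rfl, fun x _ => isEmptyElim x⟩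
      exact Nat.le_zero.1 (Nat.sInf_le h0)
    have hent : ∀ ε : ℝ, entSR T univ ε = 0 := by
      intro ε
      have heq : (fun L : ℝ => Real.log (spanNum (dOmR T (cubeR D 0 L)) univ ε) / L ^ D)
          = fun _ => (0:ℝ) := by
        funext L; rw [hsp]; simp
      unfold entSR
      rw [heq, limsup_const]
    unfold mdimMUpperR
    have heq : (fun ε : ℝ => entSR T univ ε / Real.log (1 / ε)) = fun _ => (0:ℝ) := by
      funext ε; rw [hent]; simp
    rw [heq, limsup_const]
  · obtain ⟨C, hC⟩ := exists_dist_bound (X := X)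
    obtain ⟨η, hη, hA⟩ := unif_cont T hTc hδ
    obtain ⟨S₀, hS₀ne, hS₀⟩ := exists_net (X := X) (half_pos hη)
    have key : ∀ ε : ℝ, 0 < ε → ε ≤ δ →
        0 ≤ entSR T univ ε ∧ entSR T univ ε ≤ Real.log S₀.card :=
      fun ε hε hεδ => ent_bounds T hTc hT0 hTadd hδ hexp hA hS₀ hC hε hεδ
    have hmem : Ioo (0:ℝ) (min δ 1) ∈ nhdsWithin 0 (Set.Ioi 0) :=
      Ioo_mem_nhdsGT_of_mem ⟨le_refl 0, lt_min hδ one_pos⟩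
    have hlog : Tendsto (fun ε : ℝ => Real.log (1 / ε)) (nhdsWithin 0 (Set.Ioi 0)) atTop := by
      exact (Real.tendsto_log_atTop.comp tendsto_inv_nhdsGT_zero).congr
        (fun ε => by rw [Function.comp_apply, one_div])
    have htop : Tendsto (fun ε : ℝ => Real.log S₀.card / Real.log (1 / ε))
        (nhdsWithin 0 (Set.Ioi 0)) (𝓝 0) :=
      tendsto_const_nhds.div_atTop hlog
    have hup : ∀ᶠ ε in nhdsWithin (0:ℝ) (Set.Ioi 0),
        entSR T univ ε / Real.log (1 / ε) ≤ Real.log S₀.card / Real.log (1 / ε) := by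
      filter_upwards [hmem] with ε hε
      have h1 : 0 < ε := hε.1
      have h2 : ε < 1 := lt_of_lt_of_le hε.2 (min_le_right _ _)
      have h3 : ε ≤ δ := hε.2.le.trans (min_le_left _ _)
      have hinv : (1:ℝ) < 1 / ε := by rw [lt_div_iff₀ h1]; linarith
      have hlogpos : 0 < Real.log (1 / ε) := Real.log_pos hinv
      exact (div_le_div_iff_of_pos_right hlogpos).mpr (key ε h1 h3).2
    have hlow : ∀ᶠ ε in nhdsWithin (0:ℝ) (Set.Ioi 0),
        (0:ℝ) ≤ entSR T univ ε / Real.log (1 / ε) := by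
      filter_upwards [hmem] with ε hε
      have h1 : 0 < ε := hε.1
      have h2 : ε < 1 := lt_of_lt_of_le hε.2 (min_le_right _ _)
      have h3 : ε ≤ δ := hε.2.le.trans (min_le_left _ _)
      have hinv : (1:ℝ) ≤ 1 / ε := by rw [le_div_iff₀ h1]; linarith
      exact div_nonneg (key ε h1 h3).1 (Real.log_nonneg hinv)
    have hsq : Tendsto (fun ε : ℝ => entSR T univ ε / Real.log (1 / ε))
        (nhdsWithin 0 (Set.Ioi 0)) (𝓝 0) :=
      tendsto_of_tendsto_of_tendsto_of_le_of_le' tendsto_const_nhds htop hlow hup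
    exact hsq.limsup_eq
end

section
/- Let (X,d) be a compact metric space and T: X → X a homeomorphism that is h-expansive, i.e., there exists δ > 0 with sup_{x∈X} lim_{ε→0} S(B_δ(x, d_ℤ), ε) = 0 where additionally the convergence sup_{x∈X} S(B_δ(x,d_ℤ), ε) → 0 as ε → 0 holds. Then the upper metric mean dimension mdim_M^upper(X, T, d) = 0. -/
open Filter Set MeasureTheory

/-- `d_Ω(x,y) = sup_{n ∈ Ω} d(Tⁿx, Tⁿy)` for a homeomorphism `T` and `Ω ⊆ ℤ`. -/
noncomputable def dOmZ {X : Type*} [MetricSpace X] (T : X ≃ₜ X) (Ω : Set ℤ) (x y : X) : ℝ :=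
  ⨆ n : Ω, dist ((T.toEquiv ^ (n : ℤ)) x) ((T.toEquiv ^ (n : ℤ)) y)

/-- `d_N(x,y) = max_{0 ≤ n < N} d(Tⁿx, Tⁿy)`. -/
noncomputable def dN {X : Type*} [MetricSpace X] (T : X ≃ₜ X) (N : ℕ) : X → X → ℝ :=
  dOmZ T {n : ℤ | 0 ≤ n ∧ n < (N : ℤ)}

/-- Entropy of `K` at scale `ε`: `limsup_{N→∞} (1/N) log #(K, d_N, ε)`. -/
noncomputable def entS {X : Type*} [MetricSpace X] (T : X ≃ₜ X) (K : Set X) (ε : ℝ) : ℝ :=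
  limsup (fun N : ℕ => Real.log (spanNum (dN T N) K ε) / N) atTop

/-- The Bowen ball `B_δ(x, d_ℤ)`. -/
def bowenBallZ {X : Type*} [MetricSpace X] (T : X ≃ₜ X) (δ : ℝ) (x : X) : Set X :=
  {y | dOmZ T univ x y ≤ δ}

/-- Upper metric mean dimension. -/
noncomputable def mdimMUpper {X : Type*} [MetricSpace X] (T : X ≃ₜ X) : ℝ :=
  limsup (fun ε : ℝ => entS T univ ε / Real.log (1 / ε)) (nhdsWithin 0 (Set.Ioi 0))

/-- Lower metric mean dimension. -/
noncomputable def mdimMLower {X : Type*} [MetricSpace X] (T : X ≃ₜ X) : ℝ :=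
  liminf (fun ε : ℝ => entS T univ ε / Real.log (1 / ε)) (nhdsWithin 0 (Set.Ioi 0))

set_option linter.unusedSectionVars false
set_option linter.unusedVariables false
set_option linter.unreachableTactic false
set_option linter.unusedTactic false

section Basic
variable {X : Type*} [MetricSpace X] (T : X ≃ₜ X)

/-- distance along the orbit at time `j`. -/
noncomputable def dd (T : X ≃ₜ X) (j : ℤ) (x y : X) : ℝ :=
  dist ((T.toEquiv ^ j) x) ((T.toEquiv ^ j) y)

lemma continuous_pow_apply (U : X ≃ₜ X) (k : ℕ) : Continuous fun x => (U.toEquiv ^ k) x := by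
  induction k with
  | zero => simpa using continuous_id'
  | succ n ih =>
    have : (fun x => (U.toEquiv ^ (n+1)) x) = fun x => (U.toEquiv ^ n) (U.toEquiv x) := by
      funext x; rw [pow_succ]; rfl
    rw [this]
    exact ih.comp U.continuous

lemma continuous_zpow_apply (T : X ≃ₜ X) (j : ℤ) : Continuous fun x => (T.toEquiv ^ j) x := by
  cases j with
  | ofNat k => simpa [zpow_natCast] using continuous_pow_apply T k
  | negSucc k =>
    have h1 : (T.toEquiv ^ (Int.negSucc k)) = (T.toEquiv ^ (k+1))⁻¹ := by
      rw [zpow_negSucc]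
    have h2 : (T.toEquiv ^ (k+1))⁻¹ = (T.symm.toEquiv ^ (k+1)) := by
      rw [← inv_pow]; rfl
    rw [h1, h2]
    exact continuous_pow_apply T.symm (k+1)

lemma dd_continuous (j : ℤ) (p : X) : Continuous fun y => dd T j y p :=
  ((continuous_zpow_apply T j).dist continuous_const)

lemma dd_nonneg (j : ℤ) (x y : X) : 0 ≤ dd T j x y := dist_nonneg

lemma dd_comm (j : ℤ) (x y : X) : dd T j x y = dd T j y x := dist_comm _ _

lemma dd_self (j : ℤ) (x : X) : dd T j x x = 0 := dist_self _

lemma dd_triangle (j : ℤ) (x y z : X) : dd T j x z ≤ dd T j x y + dd T j y z :=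
  dist_triangle _ _ _

lemma dd_shift (a j : ℤ) (x y : X) :
    dd T j ((T.toEquiv ^ a) x) ((T.toEquiv ^ a) y) = dd T (j + a) x y := by
  unfold dd
  rw [zpow_add]
  rfl

variable [CompactSpace X]

lemma dd_le_diam (j : ℤ) (x y : X) : dd T j x y ≤ Metric.diam (univ : Set X) :=
  Metric.dist_le_diam_of_mem Metric.isBounded_of_compactSpace (mem_univ _) (mem_univ _)

lemma dOmZ_le_iff {Ω : Set ℤ} {x y : X} {δ : ℝ} (hδ : 0 ≤ δ) :
    dOmZ T Ω x y ≤ δ ↔ ∀ j ∈ Ω, dd T j x y ≤ δ := by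
  have heq : dOmZ T Ω x y = ⨆ n : Ω, dd T (n : ℤ) x y := rfl
  rw [heq]
  constructor
  · intro h j hj
    refine le_trans ?_ h
    exact le_ciSup (f := fun n : Ω => dd T (n : ℤ) x y)
      ⟨Metric.diam (univ : Set X), by rintro r ⟨n, rfl⟩; exact dd_le_diam T _ _ _⟩ (⟨j, hj⟩ : Ω)
  · intro h
    exact Real.iSup_le (fun n => h n n.2) hδ

lemma dN_le_iff {N : ℕ} {x y : X} {ε : ℝ} (hε : 0 ≤ ε) :
    dN T N x y ≤ ε ↔ ∀ i : ℕ, i < N → dd T i x y ≤ ε := by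
  rw [dN, dOmZ_le_iff T hε]
  constructor
  · intro h i hi
    exact h i ⟨Int.ofNat_nonneg i, by exact_mod_cast hi⟩
  · rintro h j ⟨hj0, hjN⟩
    have := h j.toNat (by omega)
    rwa [Int.toNat_of_nonneg hj0] at this

lemma mem_bowenBallZ_iff {δ : ℝ} (hδ : 0 ≤ δ) {x y : X} :
    y ∈ bowenBallZ T δ x ↔ ∀ j : ℤ, dd T j x y ≤ δ := by
  rw [bowenBallZ, mem_setOf_eq, dOmZ_le_iff T hδ]
  simp

lemma self_mem_bowenBallZ {δ : ℝ} (hδ : 0 ≤ δ) (x : X) : x ∈ bowenBallZ T δ x := by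
  rw [mem_bowenBallZ_iff T hδ]
  intro j; rw [dd_self]; exact hδ

end Basic

section Span
variable {X : Type*}

/-- `S` is an `ε`-spanning set of `K` for the pseudometric `ρ`. -/
def spansSet (ρ : X → X → ℝ) (K : Set X) (ε : ℝ) (S : Finset X) : Prop :=
  ∀ x ∈ K, ∃ y ∈ S, ρ x y ≤ ε

lemma spanNum_le_card {ρ : X → X → ℝ} {K : Set X} {ε : ℝ} {S : Finset X}
    (h : spansSet ρ K ε S) : spanNum ρ K ε ≤ S.card :=
  Nat.sInf_le ⟨S, rfl, h⟩

lemma spanNum_spec {ρ : X → X → ℝ} {K : Set X} {ε : ℝ}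
    (h : ∃ S, spansSet ρ K ε S) :
    ∃ S : Finset X, S.card = spanNum ρ K ε ∧ spansSet ρ K ε S := by
  obtain ⟨S, hS⟩ := h
  have hne : {n : ℕ | ∃ S : Finset X, S.card = n ∧ ∀ x ∈ K, ∃ y ∈ S, ρ x y ≤ ε}.Nonempty :=
    ⟨S.card, S, rfl, hS⟩
  obtain ⟨S', hS', hsp⟩ := Nat.sInf_mem hne
  exact ⟨S', hS', hsp⟩

lemma one_le_spanNum {ρ : X → X → ℝ} {K : Set X} {ε : ℝ}
    (hK : K.Nonempty) (h : ∃ S, spansSet ρ K ε S) : 1 ≤ spanNum ρ K ε := by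
  obtain ⟨S, hcard, hsp⟩ := spanNum_spec h
  obtain ⟨x, hx⟩ := hK
  obtain ⟨y, hy, -⟩ := hsp x hx
  rw [← hcard]
  exact Finset.card_pos.mpr ⟨y, hy⟩

/-- From a coding map with small fibers, produce a spanning set. -/
lemma spansSet_of_code {ι : Type*} [Fintype ι] {ρ : X → X → ℝ} {K : Set X} {ε : ℝ}
    (c : X → ι) (h : ∀ x ∈ K, ∀ y ∈ K, c x = c y → ρ x y ≤ ε) :
    ∃ S : Finset X, S.card ≤ Fintype.card ι ∧ spansSet ρ K ε S := by
  classical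
  rcases K.eq_empty_or_nonempty with rfl | hK
  · exact ⟨∅, by simp, fun x hx => absurd hx (notMem_empty x)⟩
  · obtain ⟨x₀, hx₀⟩ := hK
    set g : ι → X := fun t => if h' : ∃ x, x ∈ K ∧ c x = t then h'.choose else x₀ with hg
    refine ⟨Finset.univ.image g, le_trans (Finset.card_image_le) (by simp), ?_⟩
    intro x hx
    refine ⟨g (c x), Finset.mem_image.mpr ⟨c x, Finset.mem_univ _, rfl⟩, ?_⟩
    have h' : ∃ z, z ∈ K ∧ c z = c x := ⟨x, hx, rfl⟩
    have : g (c x) = h'.choose := by rw [hg]; simp [dif_pos h']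
    rw [this]
    exact h x hx _ h'.choose_spec.1 h'.choose_spec.2.symm

end Span

section Compactness
variable {X : Type*} [MetricSpace X] [CompactSpace X] (T : X ≃ₜ X)

lemma exists_spansSet_univ {ε : ℝ} (hε : 0 < ε) (N : ℕ) :
    ∃ S, spansSet (dN T N) (univ : Set X) ε S := by
  classical
  have hcov : (univ : Set X) ⊆ ⋃ x : X, {y | ∀ i ∈ Finset.range N, dd T i x y < ε} := by
    intro x _
    exact mem_iUnion.mpr ⟨x, fun i _ => by rw [dd_self]; exact hε⟩
  obtain ⟨t, ht⟩ := isCompact_univ.elim_finite_subcover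
    (fun x : X => {y | ∀ i ∈ Finset.range N, dd T i x y < ε})
    (fun x => by
      have : {y | ∀ i ∈ Finset.range N, dd T i x y < ε}
          = ⋂ i ∈ Finset.range N, {y | dd T i x y < ε} := by
        ext y; simp
      rw [this]
      exact isOpen_biInter_finset (fun i _ =>
        isOpen_lt (by simpa [dd_comm] using dd_continuous T (i : ℤ) x) continuous_const))
    hcov
  refine ⟨t, fun x _ => ?_⟩
  obtain ⟨z, hz, hx⟩ := mem_iUnion₂.mp (ht (mem_univ x))
  refine ⟨z, hz, ?_⟩
  rw [dN_le_iff T hε.le]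
  intro i hi
  rw [dd_comm]
  exact le_of_lt (hx i (Finset.mem_range.mpr hi))

lemma exists_spansSet_of_subset {ε : ℝ} (hε : 0 < ε) (N : ℕ) (K : Set X) :
    ∃ S, spansSet (dN T N) K ε S := by
  obtain ⟨S, hS⟩ := exists_spansSet_univ T hε N
  exact ⟨S, fun x hx => hS x (mem_univ x)⟩

end Compactness

section Ent
variable {X : Type*} [MetricSpace X] [CompactSpace X] (T : X ≃ₜ X)

omit [CompactSpace X] in
lemma dd_zero (x y : X) : dd T 0 x y = dist x y := by
  unfold dd; rw [zpow_zero]; rfl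

lemma spanNum_le_pow {η : ℝ} (hη : 0 < η) (K : Set X) (N : ℕ) :
    spanNum (dN T N) K (2*η) ≤ (spanNum (dN T 1) (univ : Set X) η)^N := by
  classical
  rcases K.eq_empty_or_nonempty with rfl | hK
  · have h0 : spanNum (dN T N) (∅ : Set X) (2*η) = 0 := by
      have : spansSet (dN T N) (∅ : Set X) (2*η) ∅ := fun x hx => absurd hx (notMem_empty x)
      simpa using spanNum_le_card this
    rw [h0]; exact Nat.zero_le _
  obtain ⟨x₀, hx₀⟩ := hK
  obtain ⟨S₁, hS₁card, hS₁⟩ := spanNum_spec (exists_spansSet_univ T hη 1)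
  have hch : ∀ u : X, ∃ p, p ∈ S₁ ∧ dist u p ≤ η := by
    intro u
    obtain ⟨p, hp, hd⟩ := hS₁ u (mem_univ u)
    refine ⟨p, hp, ?_⟩
    rw [dN_le_iff T hη.le] at hd
    have := hd 0 (by norm_num)
    rwa [Int.ofNat_zero, dd_zero] at this
  set c : X → (Fin N → {p // p ∈ S₁}) := fun x i =>
    ⟨(hch ((T.toEquiv ^ ((i : ℕ) : ℤ)) x)).choose,
     (hch ((T.toEquiv ^ ((i : ℕ) : ℤ)) x)).choose_spec.1⟩ with hc
  have hcode : ∀ x ∈ K, ∀ y ∈ K, c x = c y → dN T N x y ≤ 2*η := by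
    intro x hx y hy hxy
    rw [dN_le_iff T (by positivity)]
    intro i hi
    have h1 := (hch ((T.toEquiv ^ ((i : ℕ) : ℤ)) x)).choose_spec.2
    have h2 := (hch ((T.toEquiv ^ ((i : ℕ) : ℤ)) y)).choose_spec.2
    have heq : (hch ((T.toEquiv ^ ((i : ℕ) : ℤ)) x)).choose
        = (hch ((T.toEquiv ^ ((i : ℕ) : ℤ)) y)).choose := by
      have := congrFun hxy ⟨i, hi⟩
      simpa [hc] using congrArg Subtype.val this
    unfold dd
    calc dist ((T.toEquiv ^ (i:ℤ)) x) ((T.toEquiv ^ (i:ℤ)) y)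
        ≤ dist ((T.toEquiv ^ (i:ℤ)) x) ((hch ((T.toEquiv ^ ((i : ℕ) : ℤ)) x)).choose)
          + dist ((hch ((T.toEquiv ^ ((i : ℕ) : ℤ)) x)).choose) ((T.toEquiv ^ (i:ℤ)) y) :=
          dist_triangle _ _ _
      _ ≤ η + η := by
          refine add_le_add h1 ?_
          rw [dist_comm, heq]
          exact h2
      _ = 2*η := by ring
  obtain ⟨S, hcard, hsp⟩ := spansSet_of_code c hcode
  refine le_trans (spanNum_le_card hsp) (le_trans hcard ?_)
  rw [Fintype.card_fun]
  simp [Fintype.card_coe, hS₁card]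

omit [MetricSpace X] [CompactSpace X] in
lemma log_spanNum_nonneg (ρ : X → X → ℝ) (K : Set X) (ε : ℝ) :
    0 ≤ Real.log (spanNum ρ K ε) := by
  rcases Nat.eq_zero_or_pos (spanNum ρ K ε) with h | h
  · simp [h]
  · exact Real.log_nonneg (by exact_mod_cast h)

lemma g_nonneg (K : Set X) (ε : ℝ) (N : ℕ) :
    0 ≤ Real.log (spanNum (dN T N) K ε) / N :=
  div_nonneg (log_spanNum_nonneg _ _ _) (Nat.cast_nonneg N)

lemma g_le_logR [Nonempty X] {ε : ℝ} (hε : 0 < ε) (K : Set X) (N : ℕ) :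
    Real.log (spanNum (dN T N) K ε) / N
      ≤ Real.log (spanNum (dN T 1) (univ : Set X) (ε/2)) := by
  have hR1 : 1 ≤ spanNum (dN T 1) (univ : Set X) (ε/2) :=
    one_le_spanNum univ_nonempty (exists_spansSet_univ T (by positivity) 1)
  have hlogR : 0 ≤ Real.log (spanNum (dN T 1) (univ : Set X) (ε/2)) :=
    Real.log_nonneg (by exact_mod_cast hR1)
  rcases Nat.eq_zero_or_pos N with rfl | hN
  · simpa using hlogR
  have hle : spanNum (dN T N) K ε ≤ (spanNum (dN T 1) (univ : Set X) (ε/2))^N := by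
    have := spanNum_le_pow T (by positivity : (0:ℝ) < ε/2) K N
    rwa [show 2*(ε/2) = ε by ring] at this
  have hlog : Real.log (spanNum (dN T N) K ε)
      ≤ N * Real.log (spanNum (dN T 1) (univ : Set X) (ε/2)) := by
    rcases Nat.eq_zero_or_pos (spanNum (dN T N) K ε) with h | h
    · simp only [h, Nat.cast_zero, Real.log_zero]
      positivity
    · calc Real.log (spanNum (dN T N) K ε)
          ≤ Real.log ((spanNum (dN T 1) (univ : Set X) (ε/2))^N : ℕ) :=
            Real.log_le_log (by exact_mod_cast h) (by exact_mod_cast hle)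
        _ = N * Real.log (spanNum (dN T 1) (univ : Set X) (ε/2)) := by
            push_cast
            rw [Real.log_pow]
  rw [div_le_iff₀ (by exact_mod_cast hN)]
  calc Real.log (spanNum (dN T N) K ε)
      ≤ N * Real.log (spanNum (dN T 1) (univ : Set X) (ε/2)) := hlog
    _ = Real.log (spanNum (dN T 1) (univ : Set X) (ε/2)) * N := by ring

lemma entS_nonneg [Nonempty X] {K : Set X} (hK : K.Nonempty) {ε : ℝ} (hε : 0 < ε) :
    0 ≤ entS T K ε := by
  refine le_limsup_of_frequently_le (Frequently.of_forall (g_nonneg T K ε)) ?_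
  exact isBoundedUnder_of ⟨Real.log (spanNum (dN T 1) (univ : Set X) (ε/2)), g_le_logR T hε K⟩

lemma entS_le_logR [Nonempty X] (K : Set X) {ε : ℝ} (hε : 0 < ε) :
    entS T K ε ≤ Real.log (spanNum (dN T 1) (univ : Set X) (ε/2)) := by
  refine limsup_le_of_le ?_ (Eventually.of_forall (g_le_logR T hε K))
  exact isCoboundedUnder_le_of_le atTop (g_nonneg T K ε)

lemma eventually_spanNum_le [Nonempty X] {K : Set X} (hK : K.Nonempty) {ε : ℝ} (hε : 0 < ε)
    {s γ : ℝ} (hγ : 0 < γ) (hs : entS T K ε ≤ s) :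
    ∀ᶠ N in atTop, 1 ≤ N ∧
      ((spanNum (dN T N) K ε : ℝ) ≤ Real.exp (N * (s + γ))) := by
  have hbd : IsBoundedUnder (· ≤ ·) atTop
      (fun N : ℕ => Real.log (spanNum (dN T N) K ε) / N) :=
    isBoundedUnder_of ⟨Real.log (spanNum (dN T 1) (univ : Set X) (ε/2)), g_le_logR T hε K⟩
  have hev : ∀ᶠ N in atTop,
      Real.log (spanNum (dN T N) K ε) / N < s + γ :=
    eventually_lt_of_limsup_lt (lt_of_le_of_lt hs (by linarith)) hbd
  filter_upwards [hev, eventually_ge_atTop 1] with N hN hN1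
  refine ⟨hN1, ?_⟩
  have hNpos : (0:ℝ) < N := by exact_mod_cast hN1
  have hlog : Real.log (spanNum (dN T N) K ε) ≤ N * (s + γ) := by
    rw [div_lt_iff₀ hNpos] at hN
    nlinarith
  have h1 : 1 ≤ spanNum (dN T N) K ε :=
    one_le_spanNum hK (exists_spansSet_of_subset T hε N K)
  calc (spanNum (dN T N) K ε : ℝ)
      = Real.exp (Real.log (spanNum (dN T N) K ε)) := by
        rw [Real.exp_log (by exact_mod_cast h1)]
    _ ≤ Real.exp (N * (s + γ)) := Real.exp_le_exp.mpr hlog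

end Ent

section StepA
variable {X : Type*} [MetricSpace X] [CompactSpace X] [Nonempty X] (T : X ≃ₜ X)

lemma stepA {δ ε γ : ℝ} (hδ : 0 < δ) (hε : 0 < ε) (hγ : 0 < γ) :
    ∃ m : ℕ, 1 ≤ m ∧ ∀ z : X, ∃ (n : ℕ) (S : Finset X), 1 ≤ n ∧ n ≤ m ∧
      ((S.card : ℝ) ≤ Real.exp (n * ((⨆ x : X, entS T (bowenBallZ T δ x) (ε/2)) + γ))) ∧
      ∀ y : X, (∀ j : ℤ, -(m:ℤ) ≤ j → j ≤ (m:ℤ) → dd T j z y ≤ δ/2) →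
        ∃ p ∈ S, ∀ i : ℕ, i < n → dd T (i:ℤ) y p ≤ ε := by
  classical
  set s : ℝ := ⨆ x : X, entS T (bowenBallZ T δ x) (ε/2) with hs
  have hsx : ∀ x : X, entS T (bowenBallZ T δ x) (ε/2) ≤ s := by
    intro x
    refine le_ciSup (f := fun x : X => entS T (bowenBallZ T δ x) (ε/2))
      ⟨Real.log (spanNum (dN T 1) (univ : Set X) ((ε/2)/2)), ?_⟩ x
    rintro r ⟨x', rfl⟩
    exact entS_le_logR T _ (by positivity)
  -- for each x choose a time n and a spanning set S of the Bowen ball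
  have key : ∀ x : X, ∃ (n : ℕ) (S : Finset X), 1 ≤ n ∧
      ((S.card : ℝ) ≤ Real.exp (n * (s + γ))) ∧
      spansSet (dN T n) (bowenBallZ T δ x) (ε/2) S := by
    intro x
    have hev := eventually_spanNum_le T (K := bowenBallZ T δ x)
      ⟨x, self_mem_bowenBallZ T hδ.le x⟩ (by positivity : (0:ℝ) < ε/2) hγ (hsx x)
    obtain ⟨n, hn1, hnle⟩ := hev.exists
    obtain ⟨S, hScard, hSspan⟩ :=
      spanNum_spec (exists_spansSet_of_subset T (by positivity : (0:ℝ) < ε/2) n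
        (bowenBallZ T δ x))
    refine ⟨n, S, hn1, ?_, hSspan⟩
    rw [show ((S.card : ℝ)) = ((spanNum (dN T n) (bowenBallZ T δ x) (ε/2) : ℕ) : ℝ) by
      rw [hScard]]
    exact hnle
  choose nfun Sfun hn1 hcard hspan using key
  -- the open sets U x
  set U : X → Set X := fun x =>
    ⋃ p ∈ Sfun x, ⋂ i ∈ Finset.range (nfun x), {y | dd T (i:ℤ) y p < ε} with hU
  have hUopen : ∀ x, IsOpen (U x) := by
    intro x
    refine isOpen_biUnion (fun p _ => isOpen_biInter_finset (fun i _ => ?_))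
    exact isOpen_lt (dd_continuous T (i:ℤ) p) continuous_const
  have hΓU : ∀ x, bowenBallZ T δ x ⊆ U x := by
    intro x y hy
    obtain ⟨p, hp, hd⟩ := hspan x y hy
    refine mem_biUnion hp ?_
    simp only [mem_iInter, mem_setOf_eq]
    intro i hi
    rw [dN_le_iff T (by positivity)] at hd
    exact lt_of_le_of_lt (hd i (Finset.mem_range.mp hi)) (by linarith)
  -- windows shrink into U x
  have hW : ∀ x : X, ∃ k : ℕ, ∀ y : X,
      (∀ j : ℤ, -(k:ℤ) ≤ j → j ≤ (k:ℤ) → dd T j x y ≤ δ) → y ∈ U x := by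
    intro x
    set t : ℕ → Set X := fun k =>
      {y | ∀ j ∈ Finset.Icc (-(k:ℤ)) (k:ℤ), dd T j x y ≤ δ} ∩ (U x)ᶜ with ht
    have htclosed : ∀ k, IsClosed (t k) := by
      intro k
      refine IsClosed.inter ?_ (isClosed_compl_iff.mpr (hUopen x))
      have : {y | ∀ j ∈ Finset.Icc (-(k:ℤ)) (k:ℤ), dd T j x y ≤ δ}
          = ⋂ j ∈ Finset.Icc (-(k:ℤ)) (k:ℤ), {y | dd T j y x ≤ δ} := by
        ext y; simp [dd_comm]
      rw [this]
      exact isClosed_biInter (fun j _ => isClosed_le (dd_continuous T j x) continuous_const)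
    have hempty : (univ : Set X) ∩ ⋂ k, t k = ∅ := by
      by_contra hne
      obtain ⟨y, -, hy⟩ := nonempty_iff_ne_empty.mpr hne
      have hyΓ : y ∈ bowenBallZ T δ x := by
        rw [mem_bowenBallZ_iff T hδ.le]
        intro j
        have hyk := mem_iInter.mp hy j.natAbs
        exact hyk.1 j (Finset.mem_Icc.mpr (by omega))
      have hyU : y ∈ U x := hΓU x hyΓ
      exact (mem_iInter.mp hy 0).2 hyU
    obtain ⟨u, hu⟩ := isCompact_univ.elim_finite_subfamily_closed t htclosed hempty
    refine ⟨u.sup id, fun y hy => ?_⟩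
    by_contra hyU
    have : y ∈ (univ : Set X) ∩ ⋂ k ∈ u, t k := by
      refine ⟨mem_univ y, mem_biInter (fun k hk => ⟨?_, hyU⟩)⟩
      intro j hj
      rw [Finset.mem_Icc] at hj
      have hkle : k ≤ u.sup id := Finset.le_sup (f := id) hk
      have hkle' : (k:ℤ) ≤ ((u.sup id : ℕ):ℤ) := by exact_mod_cast hkle
      exact hy j (by omega) (by omega)
    rw [hu] at this
    exact this
  choose kfun hk using hW
  -- the open neighborhoods O x and the finite subcover
  set O : X → Set X := fun x =>
    {z | ∀ j ∈ Finset.Icc (-(kfun x):ℤ) (kfun x), dd T j x z < δ/2} with hO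
  have hOopen : ∀ x, IsOpen (O x) := by
    intro x
    have : O x = ⋂ j ∈ Finset.Icc (-(kfun x):ℤ) (kfun x), {z | dd T j z x < δ/2} := by
      ext z; simp [hO, dd_comm]
    rw [this]
    exact isOpen_biInter_finset
      (fun j _ => isOpen_lt (dd_continuous T j x) continuous_const)
  have hxO : ∀ x : X, x ∈ O x := by
    intro x j hj
    rw [dd_self]
    positivity
  obtain ⟨tt, htt⟩ := isCompact_univ.elim_finite_subcover O hOopen
    (fun x _ => mem_iUnion.mpr ⟨x, hxO x⟩)
  refine ⟨max 1 (tt.sup fun x => max (kfun x) (nfun x)), le_max_left _ _, ?_⟩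
  set m := max 1 (tt.sup fun x => max (kfun x) (nfun x)) with hm
  intro z
  obtain ⟨x, hxt, hzO⟩ := mem_iUnion₂.mp (htt (mem_univ z))
  have hsup : max (kfun x) (nfun x) ≤ m :=
    le_trans (Finset.le_sup (f := fun x => max (kfun x) (nfun x)) hxt) (le_max_right _ _)
  refine ⟨nfun x, Sfun x, hn1 x, le_trans (le_max_right _ _) hsup, hcard x, ?_⟩
  intro y hy
  have hyU : y ∈ U x := by
    refine hk x y (fun j hj1 hj2 => ?_)
    have h1 : dd T j x z ≤ δ/2 := by
      refine le_of_lt (hzO j (Finset.mem_Icc.mpr ⟨hj1, hj2⟩))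
    have hkm : (kfun x : ℤ) ≤ (m:ℤ) := by
      exact_mod_cast le_trans (le_max_left _ _) hsup
    have h2 : dd T j z y ≤ δ/2 := hy j (by omega) (by omega)
    calc dd T j x y ≤ dd T j x z + dd T j z y := dd_triangle T j x z y
      _ ≤ δ/2 + δ/2 := add_le_add h1 h2
      _ = δ := by ring
  obtain ⟨p, hp, hpy⟩ := mem_iUnion₂.mp hyU
  refine ⟨p, hp, fun i hi => ?_⟩
  have := mem_iInter₂.mp hpy i (Finset.mem_range.mpr hi)
  exact le_of_lt this

end StepA

section Blocks
variable {X : Type*} [MetricSpace X]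

lemma zpow_zpow_apply (T : X ≃ₜ X) (a b : ℤ) (x : X) :
    (T.toEquiv ^ a) ((T.toEquiv ^ b) x) = (T.toEquiv ^ (a + b)) x := by
  rw [zpow_add]; rfl

/-- Block starting times along the orbit of `e`. -/
noncomputable def blkT (T : X ≃ₜ X) (nf : X → ℕ) (e : X) : ℕ → ℕ
  | 0 => 0
  | k+1 => blkT T nf e k + nf ((T.toEquiv ^ (blkT T nf e k : ℤ)) e)

lemma le_blkT (T : X ≃ₜ X) {nf : X → ℕ} (hnf : ∀ z, 1 ≤ nf z) (e : X) (k : ℕ) :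
    k ≤ blkT T nf e k := by
  induction k with
  | zero => simp [blkT]
  | succ n ih =>
    have := hnf ((T.toEquiv ^ (blkT T nf e n : ℤ)) e)
    simp only [blkT]
    omega

lemma blkT_sum (T : X ≃ₜ X) (nf : X → ℕ) (e : X) (K : ℕ) :
    blkT T nf e K = ∑ k ∈ Finset.range K, nf ((T.toEquiv ^ (blkT T nf e k : ℤ)) e) := by
  induction K with
  | zero => simp [blkT]
  | succ n ih => rw [Finset.sum_range_succ, ← ih]; rfl

lemma exists_block (f : ℕ → ℕ) (h0 : f 0 = 0) {u K : ℕ} (hu : u < f K) :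
    ∃ k, k < K ∧ f k ≤ u ∧ u < f (k+1) := by
  induction K with
  | zero => omega
  | succ n ih =>
    by_cases h : u < f n
    · obtain ⟨k, hk, h1, h2⟩ := ih h
      exact ⟨k, by omega, h1, h2⟩
    · exact ⟨n, by omega, by omega, hu⟩

end Blocks

section StepB
variable {X : Type*} [MetricSpace X] [CompactSpace X] [Nonempty X] (T : X ≃ₜ X)

lemma stepB {δ ε γ : ℝ} (hδ : 0 < δ) (hε : 0 < ε) (hγ : 0 < γ) :
    ∃ m : ℕ, 1 ≤ m ∧ ∀ N : ℕ, 1 ≤ N →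
      (spanNum (dN T N) (univ : Set X) (2*ε) : ℝ) ≤
        ((spanNum (dN T 1) (univ : Set X) (δ/4) : ℕ) : ℝ)^(N+2*m)
          * Real.exp ((N+m) * ((⨆ x : X, entS T (bowenBallZ T δ x) (ε/2)) + γ)) := by
  classical
  set s : ℝ := ⨆ x : X, entS T (bowenBallZ T δ x) (ε/2) with hs
  have hs0 : 0 ≤ s :=
    Real.iSup_nonneg fun x =>
      entS_nonneg T ⟨x, self_mem_bowenBallZ T hδ.le x⟩ (by positivity)
  obtain ⟨m, hm1, hA⟩ := stepA T hδ hε hγ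
  choose nfun Sfun hn1 hnm hcard hAspan using hA
  have hSne : ∀ z : X, ∃ p, p ∈ Sfun z := by
    intro z
    obtain ⟨p, hp, -⟩ := hAspan z z (fun j _ _ => by rw [dd_self]; positivity)
    exact ⟨p, hp⟩
  refine ⟨m, hm1, fun N hN => ?_⟩
  -- outer spanning set E at scale δ/2 on the window [-m, N+m)
  set N' := N + 2*m with hN'
  obtain ⟨S', hS'card, hS'span⟩ :=
    spanNum_spec (exists_spansSet_univ T (by positivity : (0:ℝ) < δ/2) N')
  set E : Finset X := S'.image (fun q => (T.toEquiv ^ (m:ℤ)) q) with hE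
  have hEspan : ∀ x : X, ∃ e ∈ E, ∀ j : ℤ, -(m:ℤ) ≤ j → j < (N:ℤ)+m → dd T j e x ≤ δ/2 := by
    intro x
    obtain ⟨q, hq, hdq⟩ := hS'span ((T.toEquiv ^ (-(m:ℤ))) x) (mem_univ _)
    refine ⟨(T.toEquiv ^ (m:ℤ)) q, Finset.mem_image.mpr ⟨q, hq, rfl⟩, ?_⟩
    intro j hj1 hj2
    rw [dN_le_iff T (by positivity)] at hdq
    have hix : ((j + m).toNat) < N' := by omega
    have := hdq (j+m).toNat hix
    rw [Int.toNat_of_nonneg (by omega)] at this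
    have hxe : x = (T.toEquiv ^ (m:ℤ)) ((T.toEquiv ^ (-(m:ℤ))) x) := by
      rw [zpow_zpow_apply]; simp
    calc dd T j ((T.toEquiv ^ (m:ℤ)) q) x
        = dd T j ((T.toEquiv ^ (m:ℤ)) q) ((T.toEquiv ^ (m:ℤ)) ((T.toEquiv ^ (-(m:ℤ))) x)) := by
          rw [← hxe]
      _ = dd T (j + m) q ((T.toEquiv ^ (-(m:ℤ))) x) := dd_shift T m j _ _
      _ = dd T (j + m) ((T.toEquiv ^ (-(m:ℤ))) x) q := dd_comm T _ _ _
      _ ≤ δ/2 := this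
  -- spanning each D e
  have hDe : ∀ e : X, ∃ Se : Finset X,
      ((Se.card : ℝ) ≤ Real.exp ((N+m) * (s + γ))) ∧
      spansSet (dN T N) {y | ∀ j : ℤ, -(m:ℤ) ≤ j → j < (N:ℤ)+m → dd T j e y ≤ δ/2}
        (2*ε) Se := by
    intro e
    set D : Set X := {y | ∀ j : ℤ, -(m:ℤ) ≤ j → j < (N:ℤ)+m → dd T j e y ≤ δ/2} with hD
    set tK : ℕ → ℕ := blkT T nfun e with htK
    set zc : ℕ → X := fun k => (T.toEquiv ^ (tK k : ℤ)) e with hzc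
    have htK0 : tK 0 = 0 := rfl
    have hKex : ∃ K, N ≤ tK K := ⟨N, le_blkT T hn1 e N⟩
    set K := Nat.find hKex with hK
    have hKspec : N ≤ tK K := Nat.find_spec hKex
    have hKmin : ∀ k, k < K → tK k < N := fun k hk => by
      have := Nat.find_min hKex hk; omega
    have hKpos : 1 ≤ K := by
      rcases Nat.eq_zero_or_pos K with h0 | h
      · exfalso; rw [h0] at hKspec; rw [htK0] at hKspec; omega
      · exact h
    have htKK : tK K < N + m := by
      have h1 : tK (K-1) < N := hKmin _ (by omega)
      have h2 : tK K = tK (K-1) + nfun (zc (K-1)) := by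
        have : K = (K-1) + 1 := by omega
        rw [this]; rfl
      have := hnm (zc (K-1))
      omega
    -- coding map
    set code : X → (∀ k : Fin K, {p // p ∈ Sfun (zc k)}) := fun y k =>
      if h : ∃ p, p ∈ Sfun (zc k) ∧
          ∀ i : ℕ, i < nfun (zc k) → dd T (i:ℤ) ((T.toEquiv ^ (tK k : ℤ)) y) p ≤ ε then
        ⟨h.choose, h.choose_spec.1⟩
      else ⟨(hSne (zc k)).choose, (hSne (zc k)).choose_spec⟩ with hcode
    have hgood : ∀ y ∈ D, ∀ k : Fin K,
        ∀ i : ℕ, i < nfun (zc k) →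
          dd T (i:ℤ) ((T.toEquiv ^ (tK k : ℤ)) y) ((code y k : X)) ≤ ε := by
      intro y hy k
      have hcond : ∃ p, p ∈ Sfun (zc k) ∧
          ∀ i : ℕ, i < nfun (zc k) → dd T (i:ℤ) ((T.toEquiv ^ (tK k : ℤ)) y) p ≤ ε := by
        have hwin : ∀ j : ℤ, -(m:ℤ) ≤ j → j ≤ (m:ℤ) →
            dd T j (zc k) ((T.toEquiv ^ (tK k : ℤ)) y) ≤ δ/2 := by
          intro j hj1 hj2
          rw [hzc]
          rw [dd_shift T (tK k : ℤ) j e y]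
          have htk : tK k < N := hKmin k k.2
          exact hy (j + tK k) (by omega) (by omega)
        obtain ⟨p, hp, hpy⟩ := hAspan (zc k) ((T.toEquiv ^ (tK k : ℤ)) y) hwin
        exact ⟨p, hp, hpy⟩
      intro i hi
      have : code y k = ⟨hcond.choose, hcond.choose_spec.1⟩ := by
        rw [hcode]; exact dif_pos hcond
      rw [this]
      exact hcond.choose_spec.2 i hi
    have hfiber : ∀ y ∈ D, ∀ y' ∈ D, code y = code y' → dN T N y y' ≤ 2*ε := by
      intro y hy y' hy' hcc
      rw [dN_le_iff T (by positivity)]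
      intro u hu
      obtain ⟨k, hkK, hk1, hk2⟩ := exists_block tK htK0 (lt_of_lt_of_le hu hKspec)
      have hik : u - tK k < nfun (zc k) := by
        have : tK (k+1) = tK k + nfun (zc k) := rfl
        omega
      have h1 := hgood y hy ⟨k, hkK⟩ (u - tK k) hik
      have h2 := hgood y' hy' ⟨k, hkK⟩ (u - tK k) hik
      rw [hcc] at h1
      have hshift : ∀ w : X, dd T ((u - tK k : ℕ) : ℤ) ((T.toEquiv ^ (tK k : ℤ)) y)
          ((T.toEquiv ^ (tK k : ℤ)) w) = dd T (u : ℤ) y w := by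
        intro w
        rw [dd_shift]
        congr 1
        omega
      have hdd : dd T (u:ℤ) y y' ≤ 2*ε := by
        have htri := dd_triangle T ((u - tK k : ℕ) : ℤ)
          ((T.toEquiv ^ (tK k : ℤ)) y) ((code y' ⟨k, hkK⟩ : X)) ((T.toEquiv ^ (tK k : ℤ)) y')
        rw [dd_comm T _ ((code y' ⟨k, hkK⟩ : X)) ((T.toEquiv ^ (tK k : ℤ)) y')] at htri
        have := le_trans htri (add_le_add h1 h2)
        calc dd T (u:ℤ) y y'
            = dd T ((u - tK k : ℕ) : ℤ) ((T.toEquiv ^ (tK k : ℤ)) y)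
              ((T.toEquiv ^ (tK k : ℤ)) y') := by
              rw [dd_shift]; congr 1; omega
          _ ≤ 2*ε := by linarith
      exact hdd
    obtain ⟨Se, hSecard, hSespan⟩ := spansSet_of_code code hfiber
    refine ⟨Se, ?_, hSespan⟩
    have hcardpi : (Fintype.card (∀ k : Fin K, {p // p ∈ Sfun (zc k)}) : ℝ)
        = ∏ k : Fin K, ((Sfun (zc k)).card : ℝ) := by
      rw [Fintype.card_pi]
      push_cast
      exact Finset.prod_congr rfl (fun k _ => by rw [Fintype.card_coe])
    have hprod : ∏ k : Fin K, ((Sfun (zc k)).card : ℝ)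
        ≤ Real.exp ((tK K) * (s + γ)) := by
      have : ∏ k : Fin K, ((Sfun (zc k)).card : ℝ)
          ≤ ∏ k : Fin K, Real.exp ((nfun (zc k)) * (s + γ)) :=
        Finset.prod_le_prod (fun k _ => Nat.cast_nonneg _) (fun k _ => hcard (zc k))
      refine le_trans this (le_of_eq ?_)
      rw [← Real.exp_sum]
      congr 1
      rw [← Finset.sum_mul]
      congr 1
      rw [show tK K = ∑ k ∈ Finset.range K, nfun (zc k) from blkT_sum T nfun e K]
      push_cast
      exact (Finset.sum_range fun k => ((nfun (zc k) : ℝ))).symm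
    calc (Se.card : ℝ) ≤ (Fintype.card (∀ k : Fin K, {p // p ∈ Sfun (zc k)}) : ℝ) := by
          exact_mod_cast hSecard
      _ = ∏ k : Fin K, ((Sfun (zc k)).card : ℝ) := hcardpi
      _ ≤ Real.exp ((tK K) * (s + γ)) := hprod
      _ ≤ Real.exp ((N+m) * (s + γ)) := by
          apply Real.exp_le_exp.mpr
          apply mul_le_mul_of_nonneg_right _ (by linarith)
          exact_mod_cast htKK.le
  choose Sefun hSecard hSespan using hDe
  -- assemble
  have hspanTot : spansSet (dN T N) (univ : Set X) (2*ε) (E.biUnion Sefun) := by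
    intro x _
    obtain ⟨e, heE, hex⟩ := hEspan x
    obtain ⟨p, hp, hdp⟩ := hSespan e x (fun j hj1 hj2 => hex j hj1 hj2)
    exact ⟨p, Finset.mem_biUnion.mpr ⟨e, heE, hp⟩, hdp⟩
  have hcardTot : ((E.biUnion Sefun).card : ℝ)
      ≤ (S'.card : ℝ) * Real.exp ((N+m) * (s + γ)) := by
    calc ((E.biUnion Sefun).card : ℝ)
        ≤ ((∑ e ∈ E, (Sefun e).card : ℕ) : ℝ) := by
          exact_mod_cast Finset.card_biUnion_le
      _ = ∑ e ∈ E, ((Sefun e).card : ℝ) := by push_cast; ring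
      _ ≤ ∑ e ∈ E, Real.exp ((N+m) * (s + γ)) :=
          Finset.sum_le_sum (fun e _ => hSecard e)
      _ = (E.card : ℝ) * Real.exp ((N+m) * (s + γ)) := by
          rw [Finset.sum_const, nsmul_eq_mul]
      _ ≤ (S'.card : ℝ) * Real.exp ((N+m) * (s + γ)) := by
          have : E.card ≤ S'.card := Finset.card_image_le
          have h2 : (E.card : ℝ) ≤ (S'.card : ℝ) := by exact_mod_cast this
          exact mul_le_mul_of_nonneg_right h2 (Real.exp_pos _).le
  have hS'le : (S'.card : ℝ) ≤ ((spanNum (dN T 1) (univ : Set X) (δ/4) : ℕ) : ℝ)^(N+2*m) := by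
    rw [hS'card]
    have := spanNum_le_pow T (by positivity : (0:ℝ) < δ/4) (univ : Set X) N'
    rw [show 2*(δ/4) = δ/2 by ring] at this
    have h2 : ((spanNum (dN T N') (univ : Set X) (δ/2) : ℕ) : ℝ)
        ≤ (((spanNum (dN T 1) (univ : Set X) (δ/4))^N' : ℕ) : ℝ) := by exact_mod_cast this
    rw [hN'] at *
    calc ((spanNum (dN T (N+2*m)) (univ : Set X) (δ/2) : ℕ) : ℝ)
        ≤ (((spanNum (dN T 1) (univ : Set X) (δ/4))^(N+2*m) : ℕ) : ℝ) := h2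
      _ = ((spanNum (dN T 1) (univ : Set X) (δ/4) : ℕ) : ℝ)^(N+2*m) := by push_cast; ring
  calc (spanNum (dN T N) (univ : Set X) (2*ε) : ℝ)
      ≤ ((E.biUnion Sefun).card : ℝ) := by exact_mod_cast spanNum_le_card hspanTot
    _ ≤ (S'.card : ℝ) * Real.exp ((N+m) * (s + γ)) := hcardTot
    _ ≤ ((spanNum (dN T 1) (univ : Set X) (δ/4) : ℕ) : ℝ)^(N+2*m)
        * Real.exp ((N+m) * (s + γ)) :=
        mul_le_mul_of_nonneg_right hS'le (Real.exp_pos _).le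

end StepB

open Topology

section Final
variable {X : Type*} [MetricSpace X] [CompactSpace X] (T : X ≃ₜ X)

lemma entS_univ_le_of_stepB [Nonempty X] {δ ε : ℝ} (hδ : 0 < δ) (hε : 0 < ε) :
    entS T (univ : Set X) (2*ε) ≤
      2 * Real.log (spanNum (dN T 1) (univ : Set X) (δ/4))
        + 2 * ((⨆ x : X, entS T (bowenBallZ T δ x) (ε/2)) + 1) := by
  classical
  obtain ⟨m, hm1, hB⟩ := stepB T hδ hε one_pos
  set s : ℝ := ⨆ x : X, entS T (bowenBallZ T δ x) (ε/2) with hs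
  have hs0 : 0 ≤ s :=
    Real.iSup_nonneg fun x =>
      entS_nonneg T ⟨x, self_mem_bowenBallZ T hδ.le x⟩ (by positivity)
  set R : ℕ := spanNum (dN T 1) (univ : Set X) (δ/4) with hR
  have hR1 : 1 ≤ R := one_le_spanNum univ_nonempty (exists_spansSet_univ T (by positivity) 1)
  have hlogR : 0 ≤ Real.log R := Real.log_nonneg (by exact_mod_cast hR1)
  refine limsup_le_of_le (isCoboundedUnder_le_of_le atTop (g_nonneg T univ (2*ε))) ?_
  filter_upwards [eventually_ge_atTop (max 1 (2*m))] with N hNge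
  have hN1 : 1 ≤ N := le_trans (le_max_left _ _) hNge
  have hN2m : 2*m ≤ N := le_trans (le_max_right _ _) hNge
  have hNpos : (0:ℝ) < N := by exact_mod_cast hN1
  have hbound := hB N hN1
  have hlog : Real.log (spanNum (dN T N) (univ : Set X) (2*ε))
      ≤ (N+2*m) * Real.log R + (N+m) * (s+1) := by
    have hrhs : ((R:ℝ)^(N+2*m) * Real.exp ((N+m) * (s + 1))) > 0 := by positivity
    rcases Nat.eq_zero_or_pos (spanNum (dN T N) (univ : Set X) (2*ε)) with h0 | hpos
    · rw [h0]
      simp only [Nat.cast_zero, Real.log_zero]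
      positivity
    · calc Real.log (spanNum (dN T N) (univ : Set X) (2*ε))
          ≤ Real.log ((R:ℝ)^(N+2*m) * Real.exp ((N+m) * (s + 1))) :=
            Real.log_le_log (by exact_mod_cast hpos) hbound
        _ = (N+2*m) * Real.log R + (N+m) * (s+1) := by
            rw [Real.log_mul (by positivity) (by positivity), Real.log_pow, Real.log_exp]
            push_cast
            ring
  rw [div_le_iff₀ hNpos]
  have h1 : ((N:ℝ)+2*m) ≤ 2*N := by
    push_cast
    have : (2*m : ℝ) ≤ N := by exact_mod_cast hN2m
    linarith
  have h2 : ((N:ℝ)+m) ≤ 2*N := by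
    push_cast
    have : (2*m : ℝ) ≤ N := by exact_mod_cast hN2m
    linarith
  calc Real.log (spanNum (dN T N) (univ : Set X) (2*ε))
      ≤ ((N:ℝ)+2*m) * Real.log R + ((N:ℝ)+m) * (s+1) := by
        convert hlog using 2 <;> push_cast <;> ring
    _ ≤ (2*N) * Real.log R + (2*N) * (s+1) := by
        refine add_le_add (mul_le_mul_of_nonneg_right h1 hlogR)
          (mul_le_mul_of_nonneg_right h2 (by linarith))
    _ = (2 * Real.log R + 2 * (s + 1)) * N := by ring

theorem stmt17' (T : X ≃ₜ X)
    (h : ∃ δ : ℝ, 0 < δ ∧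
      Tendsto (fun ε : ℝ => ⨆ x : X, entS T (bowenBallZ T δ x) ε)
        (nhdsWithin 0 (Set.Ioi 0)) (nhds 0)) :
    mdimMUpper T = 0 := by
  classical
  rcases isEmpty_or_nonempty X with hX | hX
  · -- empty space
    have hent : ∀ ε : ℝ, entS T (univ : Set X) ε = 0 := by
      intro ε
      have hsp : ∀ N : ℕ, spanNum (dN T N) (univ : Set X) ε = 0 := by
        intro N
        have : spansSet (dN T N) (univ : Set X) ε ∅ := fun x _ => (hX.false x).elim
        simpa using spanNum_le_card this
      unfold entS
      simp only [hsp, Nat.cast_zero, Real.log_zero, zero_div]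
      exact limsup_const 0
    unfold mdimMUpper
    simp only [hent, zero_div]
    exact limsup_const 0
  obtain ⟨δ, hδ, htend⟩ := h
  set R : ℕ := spanNum (dN T 1) (univ : Set X) (δ/4) with hR
  set C : ℝ := 2 * Real.log R + 4 with hC
  have hR1 : 1 ≤ R := one_le_spanNum univ_nonempty (exists_spansSet_univ T (by positivity) 1)
  have hlogR : 0 ≤ Real.log R := Real.log_nonneg (by exact_mod_cast hR1)
  have hCpos : 0 ≤ C := by rw [hC]; linarith
  -- eventually the sup over Bowen balls is ≤ 1 at scale ε/4
  have h4 : Tendsto (fun ε : ℝ => ε/4) (𝓝[>] (0:ℝ)) (𝓝[>] (0:ℝ)) := by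
    rw [tendsto_nhdsWithin_iff]
    constructor
    · have : Tendsto (fun ε : ℝ => ε/4) (𝓝 (0:ℝ)) (𝓝 ((0:ℝ)/4)) :=
        (tendsto_id.div_const 4)
      simpa using this.mono_left nhdsWithin_le_nhds
    · filter_upwards [self_mem_nhdsWithin] with ε (hε : ε ∈ Ioi (0:ℝ))
      exact mem_Ioi.mpr (div_pos (mem_Ioi.mp hε) (by norm_num))
  have hs1 : ∀ᶠ ε in 𝓝[>] (0:ℝ),
      (⨆ x : X, entS T (bowenBallZ T δ x) (ε/4)) ≤ 1 :=
    (htend.comp h4).eventually (eventually_le_nhds one_pos)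
  have hCbound : ∀ᶠ ε in 𝓝[>] (0:ℝ), entS T (univ : Set X) ε ≤ C := by
    filter_upwards [hs1, self_mem_nhdsWithin] with ε h1 hεpos
    have hε : (0:ℝ) < ε := hεpos
    have key := entS_univ_le_of_stepB T hδ (by positivity : (0:ℝ) < ε/2)
    rw [show 2*(ε/2) = ε by ring] at key
    rw [show ε/2/2 = ε/4 by ring] at key
    calc entS T (univ : Set X) ε
        ≤ 2 * Real.log R + 2 * ((⨆ x : X, entS T (bowenBallZ T δ x) (ε/4)) + 1) := key
      _ ≤ 2 * Real.log R + 2 * (1 + 1) := by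
          have := h1
          linarith
      _ = C := by rw [hC]; ring
  -- squeeze the mean dimension quotient
  have hlogtop : Tendsto (fun ε : ℝ => Real.log (1/ε)) (𝓝[>] (0:ℝ)) atTop := by
    have h := Real.tendsto_log_atTop.comp (tendsto_inv_nhdsGT_zero (𝕜 := ℝ))
    simpa [Function.comp_def, one_div] using h
  have hupper : Tendsto (fun ε : ℝ => C / Real.log (1/ε)) (𝓝[>] (0:ℝ)) (𝓝 0) :=
    Tendsto.div_atTop tendsto_const_nhds hlogtop
  have htendf : Tendsto (fun ε : ℝ => entS T (univ : Set X) ε / Real.log (1/ε))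
      (𝓝[>] (0:ℝ)) (𝓝 0) := by
    refine tendsto_of_tendsto_of_tendsto_of_le_of_le' tendsto_const_nhds hupper ?_ ?_
    · filter_upwards [Ioo_mem_nhdsGT_of_mem
        (show (0:ℝ) ∈ Ico (0:ℝ) 1 from ⟨le_refl 0, one_pos⟩)] with ε hε
      have hε0 : (0:ℝ) < ε := hε.1
      have hε1 : ε < 1 := hε.2
      have hlogpos : 0 < Real.log (1/ε) :=
        Real.log_pos (one_lt_one_div hε0 hε1)
      exact div_nonneg (entS_nonneg T univ_nonempty hε0) hlogpos.le
    · filter_upwards [hCbound, Ioo_mem_nhdsGT_of_mem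
        (show (0:ℝ) ∈ Ico (0:ℝ) 1 from ⟨le_refl 0, one_pos⟩)] with ε h1 hε
      have hε0 : (0:ℝ) < ε := hε.1
      have hε1 : ε < 1 := hε.2
      have hlogpos : 0 < Real.log (1/ε) :=
        Real.log_pos (one_lt_one_div hε0 hε1)
      gcongr
  exact htendf.limsup_eq

end Final

/-- An h-expansive homeomorphism has zero upper metric mean dimension. -/
theorem stmt17 {X : Type*} [MetricSpace X] [CompactSpace X] (T : X ≃ₜ X)
    (h : ∃ δ : ℝ, 0 < δ ∧
      Tendsto (fun ε : ℝ => ⨆ x : X, entS T (bowenBallZ T δ x) ε)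
        (nhdsWithin 0 (Set.Ioi 0)) (nhds 0)) :
    mdimMUpper T = 0 :=
  stmt17' T h
end
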